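/- For F : ℝⁿ → ℝ differentiable with L-Lipschitz gradient, h : ℝᵈ → ℝ convex, matrices A ∈ ℝ^{p×n}, B ∈ ℝ^{p×d}, c ∈ ℝᵖ and ρ > 0, let L_ρ(x,y,λ) = F(x) + h(y) − ⟨λ, Ax + By − c⟩ + (ρ/2)‖Ax + By − c‖². Let Q ∈ ℝ^{n×n} be symmetric with φ_min‖w‖² ≤ ⟨w, Qw⟩ for all w ∈ ℝⁿ (φ_min > 0), let σ_A ≥ 0 satisfy σ_A‖w‖² ≤ ‖Aw‖² for all w ∈ ℝⁿ, and let H ∈ ℝ^{d×d} be symmetric with s_H‖w‖² ≤ ⟨w, Hw⟩ for all w ∈ ℝᵈ (s_H > 0). Fix x ∈ ℝⁿ, y ∈ ℝᵈ, λ ∈ ℝᵖ, v ∈ ℝⁿ, η > 0, ν > 0, ρ′ > 0. Suppose: (i) y₊ is a global minimizer of y′ ↦ L_ρ(x, y′, λ) + (1/2)⟨y′ − y, H(y′ − y)⟩; (ii) 0 = v − Aᵀλ + ρAᵀ(Ax₊ + By₊ − c) − ηQ(x − x₊); (iii) λ₊ = λ − ρ(Ax₊ + By₊ − c). Then L_{ρ′}(x₊,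 y₊, λ₊) ≤ L_ρ(x, y, λ) + (1/ρ + (ρ′ − ρ)/(2ρ²))·‖λ₊ − λ‖² + (ν/2)‖v − ∇F(x)‖² − s_H‖y₊ − y‖² − (ηφ_min + σ_Aρ/2 − L/2 − 1/(2ν))·‖x₊ − x‖². -/

import Mathlib

open Matrix
open scoped RealInnerProductSpace

/-- The action of a real matrix on Euclidean space. -/
noncomputable def mvec {m n : ℕ} (A : Matrix (Fin m) (Fin n) ℝ)
    (x : EuclideanSpace ℝ (Fin n)) : EuclideanSpace ℝ (Fin m) :=
  (WithLp.equiv 2 (Fin m → ℝ)).symm (A.mulVec ((WithLp.equiv 2 (Fin n → ℝ)) x))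

/-- The augmented Lagrangian `L_ρ(x, y, λ)` of the problem
`min F(x) + h(y)  s.t.  Ax + By = c`. -/
noncomputable def augLag {n d p : ℕ} (F : EuclideanSpace ℝ (Fin n) → ℝ)
    (h : EuclideanSpace ℝ (Fin d) → ℝ) (A : Matrix (Fin p) (Fin n) ℝ)
    (B : Matrix (Fin p) (Fin d) ℝ) (c : EuclideanSpace ℝ (Fin p)) (ρ : ℝ)
    (x : EuclideanSpace ℝ (Fin n)) (y : EuclideanSpace ℝ (Fin d))
    (lam : EuclideanSpace ℝ (Fin p)) : ℝ :=
  F x + h y - ⟪lam, mvec A x + mvec B y - c⟫ + (ρ / 2) * ‖mvec A x + mvec B y - c‖ ^ 2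

lemma mvec_add {m n : ℕ} (M : Matrix (Fin m) (Fin n) ℝ) (a b : EuclideanSpace ℝ (Fin n)) :
    mvec M (a + b) = mvec M a + mvec M b := by
  ext i; simp [mvec, Matrix.mulVec_add]

lemma mvec_smul {m n : ℕ} (M : Matrix (Fin m) (Fin n) ℝ) (t : ℝ) (a : EuclideanSpace ℝ (Fin n)) :
    mvec M (t • a) = t • mvec M a := by
  ext i; simp [mvec, Matrix.mulVec_smul]

lemma mvec_sub {m n : ℕ} (M : Matrix (Fin m) (Fin n) ℝ) (a b : EuclideanSpace ℝ (Fin n)) :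
    mvec M (a - b) = mvec M a - mvec M b := by
  ext i; simp [mvec, Matrix.mulVec_sub]

lemma mvec_neg {m n : ℕ} (M : Matrix (Fin m) (Fin n) ℝ) (a : EuclideanSpace ℝ (Fin n)) :
    mvec M (-a) = -mvec M a := by
  ext i; simp [mvec, Matrix.mulVec_neg]

lemma inner_mvec_transpose {m n : ℕ} (M : Matrix (Fin m) (Fin n) ℝ)
    (z : EuclideanSpace ℝ (Fin m)) (w : EuclideanSpace ℝ (Fin n)) :
    ⟪mvec Mᵀ z, w⟫ = ⟪z, mvec M w⟫ := by
  simp only [mvec, PiLp.inner_apply, RCLike.inner_apply, starRingEnd_apply, star_trivial,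
    Matrix.mulVec_transpose, WithLp.equiv_symm_apply, PiLp.toLp_apply, WithLp.equiv_apply, Equiv.refl_apply]
  have := Matrix.dotProduct_mulVec (WithLp.equiv 2 (Fin m → ℝ) z) M (WithLp.equiv 2 (Fin n → ℝ) w)
  simp [dotProduct, mul_comm] at this ⊢
  rw [← this]

lemma young_ineq {k : ℕ} (a b : EuclideanSpace ℝ (Fin k)) {ν : ℝ} (hν : 0 < ν) :
    ⟪a, b⟫ ≤ ν / 2 * ‖a‖ ^ 2 + 1 / (2 * ν) * ‖b‖ ^ 2 := by
  have h1 : ⟪a, b⟫ ≤ ‖a‖ * ‖b‖ := real_inner_le_norm a b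
  have key : ν / 2 * ‖a‖ ^ 2 + 1 / (2 * ν) * ‖b‖ ^ 2 - ‖a‖ * ‖b‖
      = (ν * ‖a‖ - ‖b‖) ^ 2 / (2 * ν) := by
    field_simp
    ring
  have h2 : 0 ≤ (ν * ‖a‖ - ‖b‖) ^ 2 / (2 * ν) := by positivity
  linarith

lemma norm_combo {k : ℕ} (a b : EuclideanSpace ℝ (Fin k)) {t : ℝ} (h0 : 0 ≤ t) (h1 : t ≤ 1) :
    ‖(1 - t) • a + t • b‖ ^ 2 ≤ (1 - t) * ‖a‖ ^ 2 + t * ‖b‖ ^ 2 := by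
  rw [@norm_add_sq_real, norm_smul, norm_smul, real_inner_smul_left, real_inner_smul_right]
  simp only [Real.norm_eq_abs, abs_of_nonneg h0, abs_of_nonneg (by linarith : (0:ℝ) ≤ 1 - t)]
  nlinarith [real_inner_le_norm a b, sq_nonneg (‖a‖ - ‖b‖),
    mul_nonneg h0 (by linarith : (0:ℝ) ≤ 1 - t)]

lemma descent_lemma {k : ℕ} (F : EuclideanSpace ℝ (Fin k) → ℝ)
    (gradF : EuclideanSpace ℝ (Fin k) → EuclideanSpace ℝ (Fin k))
    (hgrad : ∀ z, HasGradientAt F (gradF z) z) (L : ℝ)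
    (hlip : ∀ z z', ‖gradF z - gradF z'‖ ≤ L * ‖z - z'‖)
    (a b : EuclideanSpace ℝ (Fin k)) :
    F b ≤ F a + ⟪gradF a, b - a⟫ + L / 2 * ‖b - a‖ ^ 2 := by
  set d := b - a with hd
  set g : ℝ → ℝ := fun t => F (a + t • d) - t * ⟪gradF a, d⟫ - L / 2 * t ^ 2 * ‖d‖ ^ 2 with hg
  have hcomp : ∀ t : ℝ, HasDerivAt (fun s : ℝ => F (a + s • d)) ⟪gradF (a + t • d), d⟫ t := by
    intro t
    have h1 : HasDerivAt (fun s : ℝ => a + s • d) d t := by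
      simpa using ((hasDerivAt_id t).smul_const d).const_add a
    have h2 := (hgrad (a + t • d)).hasFDerivAt.comp_hasDerivAt t h1
    simpa [InnerProductSpace.toDual_apply_apply, Function.comp_def] using h2
  have hderiv : ∀ t : ℝ, HasDerivAt g
      (⟪gradF (a + t • d), d⟫ - ⟪gradF a, d⟫ - L / 2 * (2 * t) * ‖d‖ ^ 2) t := by
    intro t
    have h3 : HasDerivAt (fun s : ℝ => s * ⟪gradF a, d⟫) ⟪gradF a, d⟫ t := by
      simpa using (hasDerivAt_id t).mul_const (⟪gradF a, d⟫)
    have h4 : HasDerivAt (fun s : ℝ => L / 2 * s ^ 2 * ‖d‖ ^ 2) (L / 2 * (2 * t) * ‖d‖ ^ 2) t := by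
      have := ((hasDerivAt_pow 2 t).const_mul (L / 2)).mul_const (‖d‖ ^ 2)
      simpa [mul_comm, mul_assoc, mul_left_comm] using this
    exact ((hcomp t).sub h3).sub h4
  have hmono : AntitoneOn g (Set.Icc 0 1) := by
    apply antitoneOn_of_deriv_nonpos (convex_Icc 0 1)
    · exact Continuous.continuousOn (by
        have : Differentiable ℝ g := fun t => (hderiv t).differentiableAt
        exact this.continuous)
    · intro t ht
      exact (hderiv t).differentiableAt.differentiableWithinAt
    · intro t ht
      rw [interior_Icc] at ht
      rw [(hderiv t).deriv]
      have hb : ⟪gradF (a + t • d) - gradF a, d⟫ ≤ L * t * ‖d‖ ^ 2 := by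
        calc ⟪gradF (a + t • d) - gradF a, d⟫ ≤ ‖gradF (a + t • d) - gradF a‖ * ‖d‖ :=
              real_inner_le_norm _ _
          _ ≤ (L * ‖(a + t • d) - a‖) * ‖d‖ := by
              have := hlip (a + t • d) a
              nlinarith [norm_nonneg d]
          _ = L * t * ‖d‖ ^ 2 := by
              simp [norm_smul, abs_of_nonneg (le_of_lt ht.1)]
              ring
      have hi : ⟪gradF (a + t • d), d⟫ - ⟪gradF a, d⟫ = ⟪gradF (a + t • d) - gradF a, d⟫ := by
        rw [inner_sub_left]
      rw [hi]
      nlinarith [hb]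
  have h01 := hmono (Set.mem_Icc.2 ⟨le_refl 0, zero_le_one⟩)
    (Set.mem_Icc.2 ⟨zero_le_one, le_refl 1⟩) zero_le_one
  simp only [hg] at h01
  have e0 : a + (0:ℝ) • d = a := by simp
  have e1 : a + (1:ℝ) • d = b := by simp [hd]
  rw [e0, e1] at h01
  simp only [one_mul, one_pow, zero_mul, zero_pow, mul_zero, sub_zero] at h01
  linarith

set_option maxHeartbeats 2000000 in
theorem stmt_6 {n d p : ℕ} (F : EuclideanSpace ℝ (Fin n) → ℝ)
    (gradF : EuclideanSpace ℝ (Fin n) → EuclideanSpace ℝ (Fin n))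
    (hgrad : ∀ z, HasGradientAt F (gradF z) z)
    (L : ℝ) (hL : 0 ≤ L)
    (hlip : ∀ z z', ‖gradF z - gradF z'‖ ≤ L * ‖z - z'‖)
    (h : EuclideanSpace ℝ (Fin d) → ℝ) (hconv : ConvexOn ℝ Set.univ h)
    (A : Matrix (Fin p) (Fin n) ℝ) (B : Matrix (Fin p) (Fin d) ℝ)
    (c : EuclideanSpace ℝ (Fin p)) (ρ : ℝ) (hρ : 0 < ρ)
    (Q : Matrix (Fin n) (Fin n) ℝ) (hQsymm : Q.IsSymm)
    (φmin : ℝ) (hφmin : 0 < φmin)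
    (hQ : ∀ w : EuclideanSpace ℝ (Fin n), φmin * ‖w‖ ^ 2 ≤ ⟪w, mvec Q w⟫)
    (σA : ℝ) (hσA : 0 ≤ σA)
    (hA : ∀ w : EuclideanSpace ℝ (Fin n), σA * ‖w‖ ^ 2 ≤ ‖mvec A w‖ ^ 2)
    (H : Matrix (Fin d) (Fin d) ℝ) (hHsymm : H.IsSymm)
    (sH : ℝ) (hsH : 0 < sH)
    (hH : ∀ w : EuclideanSpace ℝ (Fin d), sH * ‖w‖ ^ 2 ≤ ⟪w, mvec H w⟫)
    (x : EuclideanSpace ℝ (Fin n)) (y : EuclideanSpace ℝ (Fin d))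
    (lam : EuclideanSpace ℝ (Fin p)) (v : EuclideanSpace ℝ (Fin n))
    (η ν ρ' : ℝ) (hη : 0 < η) (hν : 0 < ν) (hρ' : 0 < ρ')
    (yp : EuclideanSpace ℝ (Fin d)) (xp : EuclideanSpace ℝ (Fin n))
    (lamp : EuclideanSpace ℝ (Fin p))
    (hymin : ∀ y' : EuclideanSpace ℝ (Fin d),
      augLag F h A B c ρ x yp lam + (1 / 2) * ⟪yp - y, mvec H (yp - y)⟫ ≤
        augLag F h A B c ρ x y' lam + (1 / 2) * ⟪y' - y, mvec H (y' - y)⟫)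
    (hstat : (0 : EuclideanSpace ℝ (Fin n)) =
      v - mvec Aᵀ lam + ρ • mvec Aᵀ (mvec A xp + mvec B yp - c) - η • mvec Q (x - xp))
    (hdual : lamp = lam - ρ • (mvec A xp + mvec B yp - c)) :
    augLag F h A B c ρ' xp yp lamp ≤
      augLag F h A B c ρ x y lam +
        (1 / ρ + (ρ' - ρ) / (2 * ρ ^ 2)) * ‖lamp - lam‖ ^ 2 +
        (ν / 2) * ‖v - gradF x‖ ^ 2 - sH * ‖yp - y‖ ^ 2 -
        (η * φmin + σA * ρ / 2 - L / 2 - 1 / (2 * ν)) * ‖xp - x‖ ^ 2 := by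
  set rp := mvec A xp + mvec B yp - c with hrpdef
  set ru := mvec A x + mvec B yp - c with hrudef
  set rw0 := mvec A x + mvec B y - c with hrwdef
  set dx := xp - x with hdxdef
  have hrpru : rp = ru + mvec A dx := by
    rw [hrpdef, hrudef, hdxdef, mvec_sub]; abel
  -- Step 3: equality from the dual update and penalty change
  have hlamdiff : lamp - lam = -(ρ • rp) := by rw [hdual]; abel
  have hnorml : ‖lamp - lam‖ ^ 2 = ρ ^ 2 * ‖rp‖ ^ 2 := by
    rw [hlamdiff, norm_neg, norm_smul]
    simp [abs_of_pos hρ, mul_pow]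
  have hinnerl : ⟪lamp, rp⟫ = ⟪lam, rp⟫ - ρ * ‖rp‖ ^ 2 := by
    rw [hdual, inner_sub_left, real_inner_smul_left, real_inner_self_eq_norm_sq]
  have eq3 : augLag F h A B c ρ' xp yp lamp =
      augLag F h A B c ρ xp yp lam + (1 / ρ + (ρ' - ρ) / (2 * ρ ^ 2)) * ‖lamp - lam‖ ^ 2 := by
    simp only [augLag, ← hrpdef]
    rw [hnorml, hinnerl]
    field_simp
    ring
  -- Step 2: the x-update descent
  have hstat' : ⟪lam, mvec A dx⟫ = ⟪v, dx⟫ + ρ * ⟪rp, mvec A dx⟫ + η * ⟪dx, mvec Q dx⟫ := by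
    have h0 : (0:ℝ) = ⟪v - mvec Aᵀ lam + ρ • mvec Aᵀ rp - η • mvec Q (x - xp), dx⟫ := by
      rw [← hstat]; simp
    have hxm : x - xp = -dx := by rw [hdxdef]; abel
    rw [hxm, mvec_neg, inner_sub_left, inner_add_left, inner_sub_left, real_inner_smul_left,
      real_inner_smul_left, inner_mvec_transpose, inner_mvec_transpose, inner_neg_left] at h0
    have hcm : η * ⟪mvec Q dx, dx⟫ = η * ⟪dx, mvec Q dx⟫ := by
      rw [real_inner_comm]
    linarith [h0, hcm]
  have e1 : ⟪lam, rp⟫ = ⟪lam, ru⟫ + ⟪lam, mvec A dx⟫ := by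
    rw [hrpru, inner_add_right]
  have e2 : ‖rp‖ ^ 2 = ‖ru‖ ^ 2 + 2 * ⟪ru, mvec A dx⟫ + ‖mvec A dx‖ ^ 2 := by
    rw [hrpru]; exact norm_add_sq_real ru (mvec A dx)
  have e2' : ρ * ⟪rp, mvec A dx⟫ = ρ * ⟪ru, mvec A dx⟫ + ρ * ‖mvec A dx‖ ^ 2 := by
    rw [hrpru, inner_add_left, real_inner_self_eq_norm_sq]; ring
  have hF : F xp ≤ F x + ⟪gradF x, dx⟫ + L / 2 * ‖dx‖ ^ 2 := by
    simpa [← hdxdef] using descent_lemma F gradF hgrad L hlip x xp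
  have hyoung : ⟪gradF x, dx⟫ - ⟪v, dx⟫ ≤ ν / 2 * ‖v - gradF x‖ ^ 2 + 1 / (2 * ν) * ‖dx‖ ^ 2 := by
    have h1 := young_ineq (gradF x - v) dx hν
    rw [inner_sub_left] at h1
    have h2 : ‖v - gradF x‖ = ‖gradF x - v‖ := norm_sub_rev _ _
    rw [h2]; linarith
  have hQ' : η * (φmin * ‖dx‖ ^ 2) ≤ η * ⟪dx, mvec Q dx⟫ :=
    mul_le_mul_of_nonneg_left (hQ dx) hη.le
  have hA' : ρ / 2 * (σA * ‖dx‖ ^ 2) ≤ ρ / 2 * ‖mvec A dx‖ ^ 2 :=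
    mul_le_mul_of_nonneg_left (hA dx) (by positivity)
  have ineq2 : augLag F h A B c ρ xp yp lam ≤ augLag F h A B c ρ x yp lam
      + (ν / 2) * ‖v - gradF x‖ ^ 2
      - (η * φmin + σA * ρ / 2 - L / 2 - 1 / (2 * ν)) * ‖dx‖ ^ 2 := by
    simp only [augLag, ← hrpdef, ← hrudef]
    rw [e1, e2]
    linarith [hstat', e2', hF, hyoung, hQ', hA']
  -- Step 1: the y-update descent
  have ineq1 : augLag F h A B c ρ x yp lam ≤ augLag F h A B c ρ x y lam - sH * ‖yp - y‖ ^ 2 := by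
    set q := ⟪yp - y, mvec H (yp - y)⟫ with hqdef
    have hq : sH * ‖yp - y‖ ^ 2 ≤ q := hH _
    have hq0 : (0:ℝ) ≤ q := le_trans (by positivity) hq
    apply le_of_forall_pos_le_add
    intro ε hε
    set t := min 1 (ε / (q + 1)) with htdef
    have hq1 : (0:ℝ) < q + 1 := by linarith
    have ht0 : 0 < t := lt_min one_pos (div_pos hε hq1)
    have ht1 : t ≤ 1 := min_le_left _ _
    have htq : t * q ≤ ε := by
      have h2 : t ≤ ε / (q + 1) := min_le_right _ _
      calc t * q ≤ (ε / (q + 1)) * q := mul_le_mul_of_nonneg_right h2 hq0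
        _ ≤ ε := by rw [div_mul_eq_mul_div, div_le_iff₀ hq1]; nlinarith [hε.le, hq0]
    have hy' := hymin (yp + t • (y - yp))
    have hcomb : yp + t • (y - yp) = (1 - t) • yp + t • y := by module
    have hsub : yp + t • (y - yp) - y = (1 - t) • (yp - y) := by module
    have hqy' : ⟪yp + t • (y - yp) - y, mvec H (yp + t • (y - yp) - y)⟫ = (1 - t) ^ 2 * q := by
      rw [hsub, mvec_smul, real_inner_smul_left, real_inner_smul_right, hqdef]; ring
    have hBcomb : mvec A x + mvec B (yp + t • (y - yp)) - c = (1 - t) • ru + t • rw0 := by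
      rw [hcomb, mvec_add, mvec_smul, mvec_smul, hrudef, hrwdef]; module
    have hconv' : h (yp + t • (y - yp)) ≤ (1 - t) * h yp + t * h y := by
      rw [hcomb]
      exact hconv.2 (Set.mem_univ yp) (Set.mem_univ y) (by linarith) ht0.le (by ring)
    have hlin : ⟪lam, (1 - t) • ru + t • rw0⟫ = (1 - t) * ⟪lam, ru⟫ + t * ⟪lam, rw0⟫ := by
      rw [inner_add_right, real_inner_smul_right, real_inner_smul_right]
    have hnormc := norm_combo ru rw0 ht0.le ht1
    have haug' : augLag F h A B c ρ x (yp + t • (y - yp)) lam ≤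
        (1 - t) * augLag F h A B c ρ x yp lam + t * augLag F h A B c ρ x y lam := by
      simp only [augLag, ← hrudef, ← hrwdef]
      rw [hBcomb, hlin]
      have hmn := mul_le_mul_of_nonneg_left hnormc (by positivity : (0:ℝ) ≤ ρ / 2)
      linarith [hconv', hmn]
    rw [hqy'] at hy'
    set P := augLag F h A B c ρ x yp lam with hP
    set Y := augLag F h A B c ρ x y lam with hY
    have hkey : t * P ≤ t * (Y - (2 - t) * (q / 2)) := by linarith [hy', haug']
    have hPle : P ≤ Y - (2 - t) * (q / 2) := le_of_mul_le_mul_left hkey ht0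
    linarith [hPle, hq, htq, hε.le]
  linarith [eq3, ineq2, ineq1]
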